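/- For integers n_1, n_2 ≥ 2, the function g defined on the edges of Grid(n_1,n_2) by g({(i,j),(i,j+1)}) = (i-1)(2n_2-1) + j for (i,j) ∈ [n_1]×[n_2-1], and g({(i,j),(i+1,j)}) = (n_1-i)(2n_2-1) + 1 - j for (i,j) ∈ [n_1-1]×[n_2], is a Q_2-magic edge labeling of Grid(n_1,n_2) with Q_2-magic sum (2n_1-1)(2n_2-1) + 1. -/

import Mathlib

set_option maxHeartbeats 1000000


/-- The grid graph `Grid(n 0, …, n (d-1))`: vertices are tuples whose `i`-th coordinate
ranges over a set of size `n i` (we use `Fin (n i) = {0, …, n i - 1}`, corresponding to the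
coordinate `[n i] = {1, …, n i}` via `v ↦ v + 1`); two vertices are adjacent iff they differ
by exactly one in one coordinate and agree in all others. -/
def gridGraph {d : ℕ} (n : Fin d → ℕ) : SimpleGraph (∀ i, Fin (n i)) where
  Adj x y := ∃ i, ((x i : ℕ) + 1 = (y i : ℕ) ∨ (y i : ℕ) + 1 = (x i : ℕ)) ∧
    ∀ j, j ≠ i → x j = y j
  symm := by
    constructor
    rintro x y ⟨i, h, hj⟩
    exact ⟨i, h.symm, fun j hji => (hj j hji).symm⟩
  loopless := by
    constructor
    rintro x ⟨i, h, -⟩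
    rcases h with h | h <;> omega

/-- `f` is an `H`-magic vertex labeling of `G` with `H`-magic sum `c`:
a bijection from the vertices of `G` onto `{1, …, |V|}` such that the vertex labels of every
subgraph of `G` isomorphic to `H` sum to `c`. -/
def IsMagicVertexLabeling {V : Type*} [Fintype V] {W : Type*}
    (G : SimpleGraph V) (H : SimpleGraph W) (f : V → ℤ) (c : ℤ) : Prop :=
  Set.BijOn f Set.univ (Set.Icc 1 (Fintype.card V : ℤ)) ∧
  ∀ G' : G.Subgraph, Nonempty (G'.coe ≃g H) → ∑ᶠ v ∈ G'.verts, f v = c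

/-- `g` is an `H`-magic edge labeling of `G` with `H`-magic sum `c`:
a bijection from the edges of `G` onto `{1, …, |E|}` such that the edge labels of every
subgraph of `G` isomorphic to `H` sum to `c`. -/
def IsMagicEdgeLabeling {V : Type*} [Fintype V] {W : Type*}
    (G : SimpleGraph V) (H : SimpleGraph W) (g : Sym2 V → ℤ) (c : ℤ) : Prop :=
  Set.BijOn g G.edgeSet (Set.Icc 1 (G.edgeSet.ncard : ℤ)) ∧
  ∀ G' : G.Subgraph, Nonempty (G'.coe ≃g H) → ∑ᶠ e ∈ G'.edgeSet, g e = c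

/-- `G` admits an `H`-covering: every edge of `G` belongs to at least one subgraph of `G`
isomorphic to `H`. -/
def AdmitsCovering {V W : Type*} (G : SimpleGraph V) (H : SimpleGraph W) : Prop :=
  ∀ e ∈ G.edgeSet, ∃ G' : G.Subgraph, e ∈ G'.edgeSet ∧ Nonempty (G'.coe ≃g H)

/-- `(Fv, Fe)` is an `H`-supermagic labeling of `G` with `H`-supermagic sum `c`:
the vertex part is a bijection onto `{1, …, |V|}`, the edge part is a bijection from the
edges onto `{|V|+1, …, |V|+|E|}` (together a bijection `V ∪ E → {1, …, |V|+|E|}` mapping `V`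
onto `{1, …, |V|}`), and the labels of every subgraph isomorphic to `H` sum to `c`. -/
def IsSupermagicLabeling {V : Type*} [Fintype V] {W : Type*}
    (G : SimpleGraph V) (H : SimpleGraph W) (Fv : V → ℤ) (Fe : Sym2 V → ℤ) (c : ℤ) : Prop :=
  Set.BijOn Fv Set.univ (Set.Icc 1 (Fintype.card V : ℤ)) ∧
  Set.BijOn Fe G.edgeSet
    (Set.Icc ((Fintype.card V : ℤ) + 1) ((Fintype.card V : ℤ) + (G.edgeSet.ncard : ℤ))) ∧
  ∀ G' : G.Subgraph, Nonempty (G'.coe ≃g H) →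
    (∑ᶠ v ∈ G'.verts, Fv v) + (∑ᶠ e ∈ G'.edgeSet, Fe e) = c

/-- `G` is `H`-supermagic with `H`-supermagic sum `c`. -/
def IsSupermagic {V : Type*} [Fintype V] {W : Type*}
    (G : SimpleGraph V) (H : SimpleGraph W) (c : ℤ) : Prop :=
  AdmitsCovering G H ∧ ∃ Fv Fe, IsSupermagicLabeling G H Fv Fe c


section BC

lemma bc_adj_iff {d : ℕ} (n : Fin d → ℕ) (x y : ∀ i, Fin (n i)) :
    (gridGraph n).Adj x y ↔ ∃ i, ((x i : ℕ) + 1 = (y i : ℕ) ∨ (y i : ℕ) + 1 = (x i : ℕ)) ∧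
    ∀ j, j ≠ i → x j = y j := Iff.rfl

abbrev Vt (n₁ n₂ : ℕ) := ∀ i : Fin 2, Fin (![n₁, n₂] i)

lemma bc_vext {n₁ n₂ : ℕ} (x y : Vt n₁ n₂) (h0 : (x 0 : ℕ) = (y 0 : ℕ))
    (h1 : (x 1 : ℕ) = (y 1 : ℕ)) : x = y := by
  funext i
  fin_cases i
  · exact Fin.val_injective h0
  · exact Fin.val_injective h1

lemma bc_ne_coords {n₁ n₂ : ℕ} (x y : Vt n₁ n₂) (h : x ≠ y) :
    (x 0 : ℕ) ≠ (y 0 : ℕ) ∨ (x 1 : ℕ) ≠ (y 1 : ℕ) := by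
  by_contra hh
  push_neg at hh
  exact h (bc_vext x y hh.1 hh.2)

lemma bc_adj_h {n₁ n₂ : ℕ} (x y : Vt n₁ n₂) (h0 : x 0 = y 0) (h1 : (x 1 : ℕ) + 1 = (y 1 : ℕ)) :
    (gridGraph ![n₁, n₂]).Adj x y := by
  rw [bc_adj_iff]
  refine ⟨1, Or.inl h1, fun j hj => ?_⟩
  fin_cases j
  · exact h0
  · exact absurd rfl hj

lemma bc_adj_v {n₁ n₂ : ℕ} (x y : Vt n₁ n₂) (h0 : (x 0 : ℕ) + 1 = (y 0 : ℕ)) (h1 : x 1 = y 1) :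
    (gridGraph ![n₁, n₂]).Adj x y := by
  rw [bc_adj_iff]
  refine ⟨0, Or.inl h0, fun j hj => ?_⟩
  fin_cases j
  · exact absurd rfl hj
  · exact h1

lemma bc_adj_cases {n₁ n₂ : ℕ} (x y : Vt n₁ n₂) (h : (gridGraph ![n₁, n₂]).Adj x y) :
    ((x 0 : ℕ) = (y 0 : ℕ) ∧ ((x 1 : ℕ) + 1 = (y 1 : ℕ) ∨ (y 1 : ℕ) + 1 = (x 1 : ℕ))) ∨
    ((x 1 : ℕ) = (y 1 : ℕ) ∧ ((x 0 : ℕ) + 1 = (y 0 : ℕ) ∨ (y 0 : ℕ) + 1 = (x 0 : ℕ))) := by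
  rw [bc_adj_iff] at h
  obtain ⟨i, hs, he⟩ := h
  fin_cases i
  · exact Or.inr ⟨congrArg Fin.val (he 1 (by decide)), hs⟩
  · exact Or.inl ⟨congrArg Fin.val (he 0 (by decide)), hs⟩

lemma bc_qr_unique (B q r q' r' : ℕ) (hB : 0 < B) (hr : r < B) (hr' : r' < B)
    (h : q * B + r = q' * B + r') : q = q' ∧ r = r' := by
  have e1 : r % B = r' % B := by
    rw [← Nat.mul_add_mod B q r, ← Nat.mul_add_mod B q' r', Nat.mul_comm B q, Nat.mul_comm B q', h]
  rw [Nat.mod_eq_of_lt hr, Nat.mod_eq_of_lt hr'] at e1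
  subst e1
  have h2 : q * B = q' * B := by omega
  exact ⟨Nat.eq_of_mul_eq_mul_right hB h2, rfl⟩

section withg

variable {n₁ n₂ : ℕ} (h₁ : 2 ≤ n₁) (h₂ : 2 ≤ n₂)
    (g : Sym2 (Vt n₁ n₂) → ℤ)
    (hgh : ∀ x y : Vt n₁ n₂, x 0 = y 0 →
      (x 1 : ℕ) + 1 = (y 1 : ℕ) →
      g s(x, y) = ((x 0 : ℕ) : ℤ) * (2 * n₂ - 1) + (((x 1 : ℕ) : ℤ) + 1))
    (hgv : ∀ x y : Vt n₁ n₂, (x 0 : ℕ) + 1 = (y 0 : ℕ) →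
      x 1 = y 1 →
      g s(x, y) = ((n₁ : ℤ) - (((x 0 : ℕ) : ℤ) + 1)) * (2 * n₂ - 1) + 1 -
        (((x 1 : ℕ) : ℤ) + 1))

include h₂ hgh in
lemma bc_gval_h (x y : Vt n₁ n₂) (h0 : (x 0 : ℕ) = (y 0 : ℕ)) (h1 : (x 1 : ℕ) + 1 = (y 1 : ℕ)) :
    g s(x, y) = (((x 0 : ℕ) * (2 * n₂ - 1) + (x 1 : ℕ) : ℕ) : ℤ) + 1 := by
  rw [hgh x y (Fin.val_injective h0) h1]
  have hB : (((2 * n₂ - 1 : ℕ)) : ℤ) = 2 * (n₂ : ℤ) - 1 := by omega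
  push_cast
  rw [hB]
  ring

include h₁ h₂ hgv in
lemma bc_gval_v (x y : Vt n₁ n₂) (h0 : (x 0 : ℕ) + 1 = (y 0 : ℕ)) (h1 : (x 1 : ℕ) = (y 1 : ℕ)) :
    g s(x, y) = (((n₁ - 2 - (x 0 : ℕ)) * (2 * n₂ - 1) + (2 * n₂ - 2 - (x 1 : ℕ)) : ℕ) : ℤ) + 1 := by
  rw [hgv x y h0 (Fin.val_injective h1)]
  have hx0 : (x 0 : ℕ) ≤ n₁ - 2 := by
    have := (y 0).isLt
    have h' : (y 0 : ℕ) < n₁ := this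
    omega
  have hx1 : (x 1 : ℕ) ≤ n₂ - 1 := by
    have h' : (x 1 : ℕ) < n₂ := (x 1).isLt
    omega
  have hB : (((2 * n₂ - 1 : ℕ)) : ℤ) = 2 * (n₂ : ℤ) - 1 := by omega
  have hk : (((n₁ - 2 - (x 0 : ℕ) : ℕ)) : ℤ) = (n₁ : ℤ) - (x 0 : ℕ) - 2 := by omega
  have hrr : (((2 * n₂ - 2 - (x 1 : ℕ) : ℕ)) : ℤ) = 2 * (n₂ : ℤ) - 2 - (x 1 : ℕ) := by omega
  push_cast [hk, hrr, hB]
  ring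

include h₂ hgh hgv in
lemma bc_square_sum (p q r s : Vt n₁ n₂)
    (hpq0 : (p 0 : ℕ) = (q 0 : ℕ)) (hpq1 : (p 1 : ℕ) + 1 = (q 1 : ℕ))
    (hpr0 : (p 0 : ℕ) + 1 = (r 0 : ℕ)) (hpr1 : (p 1 : ℕ) = (r 1 : ℕ))
    (hrs0 : (r 0 : ℕ) = (s 0 : ℕ)) (hrs1 : (r 1 : ℕ) + 1 = (s 1 : ℕ))
    (hqs0 : (q 0 : ℕ) + 1 = (s 0 : ℕ)) (hqs1 : (q 1 : ℕ) = (s 1 : ℕ)) :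
    g s(p, q) + g s(q, s) + g s(r, s) + g s(p, r) =
      (2 * (n₁ : ℤ) - 1) * (2 * (n₂ : ℤ) - 1) + 1 := by
  rw [hgh p q (Fin.val_injective hpq0) hpq1, hgh r s (Fin.val_injective hrs0) hrs1,
      hgv p r hpr0 (Fin.val_injective hpr1), hgv q s hqs0 (Fin.val_injective hqs1)]
  have eb0 : ((q 0 : ℕ) : ℤ) = ((p 0 : ℕ) : ℤ) := by exact_mod_cast congrArg (Nat.cast (R := ℤ)) hpq0.symm
  have eb1 : ((q 1 : ℕ) : ℤ) = ((p 1 : ℕ) : ℤ) + 1 := by exact_mod_cast congrArg (Nat.cast (R := ℤ)) hpq1.symm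
  have er0 : ((r 0 : ℕ) : ℤ) = ((p 0 : ℕ) : ℤ) + 1 := by exact_mod_cast congrArg (Nat.cast (R := ℤ)) hpr0.symm
  have er1 : ((r 1 : ℕ) : ℤ) = ((p 1 : ℕ) : ℤ) := by exact_mod_cast congrArg (Nat.cast (R := ℤ)) hpr1.symm
  rw [eb0, eb1, er0, er1]
  ring

end withg

def bc_mkc (n₁ n₂ : ℕ) (h₁ : 2 ≤ n₁) (h₂ : 2 ≤ n₂) (i j : ℕ) : Vt n₁ n₂ :=
  Fin.cons ⟨min i (n₁ - 1), show min i (n₁ - 1) < n₁ by omega⟩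
    (Fin.cons ⟨min j (n₂ - 1), show min j (n₂ - 1) < n₂ by omega⟩ finZeroElim)

lemma bc_mkc0 (n₁ n₂ : ℕ) (h₁ : 2 ≤ n₁) (h₂ : 2 ≤ n₂) (i j : ℕ) :
    ((bc_mkc n₁ n₂ h₁ h₂ i j) 0 : ℕ) = min i (n₁ - 1) := rfl

lemma bc_mkc1 (n₁ n₂ : ℕ) (h₁ : 2 ≤ n₁) (h₂ : 2 ≤ n₂) (i j : ℕ) :
    ((bc_mkc n₁ n₂ h₁ h₂ i j) 1 : ℕ) = min j (n₂ - 1) := rfl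

def bc_edgeOf (n₁ n₂ : ℕ) (h₁ : 2 ≤ n₁) (h₂ : 2 ≤ n₂) (q r : ℕ) : Sym2 (Vt n₁ n₂) :=
  if r ≤ n₂ - 2 then s(bc_mkc n₁ n₂ h₁ h₂ q r, bc_mkc n₁ n₂ h₁ h₂ q (r+1))
  else s(bc_mkc n₁ n₂ h₁ h₂ (n₁-2-q) (2*n₂-2-r), bc_mkc n₁ n₂ h₁ h₂ (n₁-1-q) (2*n₂-2-r))

section withg2

variable {n₁ n₂ : ℕ} (h₁ : 2 ≤ n₁) (h₂ : 2 ≤ n₂)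
    (g : Sym2 (Vt n₁ n₂) → ℤ)
    (hgh : ∀ x y : Vt n₁ n₂, x 0 = y 0 →
      (x 1 : ℕ) + 1 = (y 1 : ℕ) →
      g s(x, y) = ((x 0 : ℕ) : ℤ) * (2 * n₂ - 1) + (((x 1 : ℕ) : ℤ) + 1))
    (hgv : ∀ x y : Vt n₁ n₂, (x 0 : ℕ) + 1 = (y 0 : ℕ) →
      x 1 = y 1 →
      g s(x, y) = ((n₁ : ℤ) - (((x 0 : ℕ) : ℤ) + 1)) * (2 * n₂ - 1) + 1 -
        (((x 1 : ℕ) : ℤ) + 1))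

include h₁ h₂ hgh hgv in
lemma bc_edgeOf_spec (q r : ℕ) (hq : q ≤ n₁ - 1) (hr : r < 2*n₂ - 1) (hvq : n₂ - 1 ≤ r → q ≤ n₁ - 2) :
    bc_edgeOf n₁ n₂ h₁ h₂ q r ∈ (gridGraph ![n₁, n₂]).edgeSet ∧
    g (bc_edgeOf n₁ n₂ h₁ h₂ q r) = ((q * (2*n₂-1) + r : ℕ) : ℤ) + 1 := by
  by_cases hcase : r ≤ n₂ - 2
  · unfold bc_edgeOf
    rw [if_pos hcase]
    set u := bc_mkc n₁ n₂ h₁ h₂ q r with hu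
    set v := bc_mkc n₁ n₂ h₁ h₂ q (r+1) with hv
    have hu0 : (u 0 : ℕ) = q := by rw [hu, bc_mkc0]; omega
    have hu1 : (u 1 : ℕ) = r := by rw [hu, bc_mkc1]; omega
    have hv0 : (v 0 : ℕ) = q := by rw [hv, bc_mkc0]; omega
    have hv1 : (v 1 : ℕ) = r + 1 := by rw [hv, bc_mkc1]; omega
    have hadj := bc_adj_h u v (Fin.val_injective (by omega)) (by omega)
    refine ⟨(gridGraph ![n₁, n₂]).mem_edgeSet.mpr hadj, ?_⟩
    rw [bc_gval_h h₂ g hgh u v (by omega) (by omega), hu0, hu1]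
  · unfold bc_edgeOf
    rw [if_neg hcase]
    have hq2 : q ≤ n₁ - 2 := hvq (by omega)
    set u := bc_mkc n₁ n₂ h₁ h₂ (n₁-2-q) (2*n₂-2-r) with hu
    set v := bc_mkc n₁ n₂ h₁ h₂ (n₁-1-q) (2*n₂-2-r) with hv
    have hu0 : (u 0 : ℕ) = n₁-2-q := by rw [hu, bc_mkc0]; omega
    have hu1 : (u 1 : ℕ) = 2*n₂-2-r := by rw [hu, bc_mkc1]; omega
    have hv0 : (v 0 : ℕ) = n₁-1-q := by rw [hv, bc_mkc0]; omega
    have hv1 : (v 1 : ℕ) = 2*n₂-2-r := by rw [hv, bc_mkc1]; omega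
    have hadj := bc_adj_v u v (by omega) (Fin.val_injective (by omega))
    refine ⟨(gridGraph ![n₁, n₂]).mem_edgeSet.mpr hadj, ?_⟩
    rw [bc_gval_v h₁ h₂ g hgv u v (by omega) (by omega)]
    rw [show n₁ - 2 - (u 0 : ℕ) = q by omega, show 2*n₂ - 2 - (u 1 : ℕ) = r by omega]

include h₁ h₂ hgh hgv in
lemma bc_label_inv (x y : Vt n₁ n₂) (h : (gridGraph ![n₁, n₂]).Adj x y) :
    ∃ q r : ℕ, q ≤ n₁ - 1 ∧ r < 2*n₂ - 1 ∧ (n₂ - 1 ≤ r → q ≤ n₁ - 2) ∧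
      g s(x, y) = ((q * (2*n₂-1) + r : ℕ) : ℤ) + 1 ∧ s(x, y) = bc_edgeOf n₁ n₂ h₁ h₂ q r := by
  have hx0 : (x 0 : ℕ) < n₁ := (x 0).isLt
  have hx1 : (x 1 : ℕ) < n₂ := (x 1).isLt
  have hy0 : (y 0 : ℕ) < n₁ := (y 0).isLt
  have hy1 : (y 1 : ℕ) < n₂ := (y 1).isLt
  rcases bc_adj_cases x y h with ⟨h0, h1 | h1⟩ | ⟨h0, h1 | h1⟩
  · refine ⟨(x 0 : ℕ), (x 1 : ℕ), by omega, by omega, by omega,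
      bc_gval_h h₂ g hgh x y h0 h1, ?_⟩
    unfold bc_edgeOf
    rw [if_pos (by omega)]
    have e1 : bc_mkc n₁ n₂ h₁ h₂ (x 0 : ℕ) (x 1 : ℕ) = x :=
      bc_vext _ _ (by rw [bc_mkc0]; omega) (by rw [bc_mkc1]; omega)
    have e2 : bc_mkc n₁ n₂ h₁ h₂ (x 0 : ℕ) ((x 1 : ℕ)+1) = y :=
      bc_vext _ _ (by rw [bc_mkc0]; omega) (by rw [bc_mkc1]; omega)
    rw [e1, e2]
  · refine ⟨(y 0 : ℕ), (y 1 : ℕ), by omega, by omega, by omega, ?_, ?_⟩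
    · rw [Sym2.eq_swap]
      exact bc_gval_h h₂ g hgh y x (by omega) h1
    · unfold bc_edgeOf
      rw [if_pos (by omega), Sym2.eq_swap]
      have e1 : bc_mkc n₁ n₂ h₁ h₂ (y 0 : ℕ) (y 1 : ℕ) = y :=
        bc_vext _ _ (by rw [bc_mkc0]; omega) (by rw [bc_mkc1]; omega)
      have e2 : bc_mkc n₁ n₂ h₁ h₂ (y 0 : ℕ) ((y 1 : ℕ)+1) = x :=
        bc_vext _ _ (by rw [bc_mkc0]; omega) (by rw [bc_mkc1]; omega)
      rw [e1, e2]
  · refine ⟨n₁ - 2 - (x 0 : ℕ), 2*n₂ - 2 - (x 1 : ℕ), by omega, by omega, by omega,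
      by rw [bc_gval_v h₁ h₂ g hgv x y h1 h0], ?_⟩
    unfold bc_edgeOf
    rw [if_neg (by omega)]
    have e1 : bc_mkc n₁ n₂ h₁ h₂ (n₁-2-(n₁-2-(x 0 : ℕ))) (2*n₂-2-(2*n₂-2-(x 1 : ℕ))) = x :=
      bc_vext _ _ (by rw [bc_mkc0]; omega) (by rw [bc_mkc1]; omega)
    have e2 : bc_mkc n₁ n₂ h₁ h₂ (n₁-1-(n₁-2-(x 0 : ℕ))) (2*n₂-2-(2*n₂-2-(x 1 : ℕ))) = y :=
      bc_vext _ _ (by rw [bc_mkc0]; omega) (by rw [bc_mkc1]; omega)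
    rw [e1, e2]
  · refine ⟨n₁ - 2 - (y 0 : ℕ), 2*n₂ - 2 - (y 1 : ℕ), by omega, by omega, by omega, ?_, ?_⟩
    · rw [Sym2.eq_swap]
      rw [bc_gval_v h₁ h₂ g hgv y x h1 (by omega)]
    · unfold bc_edgeOf
      rw [if_neg (by omega), Sym2.eq_swap]
      have e1 : bc_mkc n₁ n₂ h₁ h₂ (n₁-2-(n₁-2-(y 0 : ℕ))) (2*n₂-2-(2*n₂-2-(y 1 : ℕ))) = y :=
        bc_vext _ _ (by rw [bc_mkc0]; omega) (by rw [bc_mkc1]; omega)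
      have e2 : bc_mkc n₁ n₂ h₁ h₂ (n₁-1-(n₁-2-(y 0 : ℕ))) (2*n₂-2-(2*n₂-2-(y 1 : ℕ))) = x :=
        bc_vext _ _ (by rw [bc_mkc0]; omega) (by rw [bc_mkc1]; omega)
      rw [e1, e2]

end withg2

theorem bc_cyc_square (a0 a1 b0 b1 c0 c1 d0 d1 : ℕ)
    (hab : (a0 = b0 ∧ (a1 + 1 = b1 ∨ b1 + 1 = a1)) ∨ (a1 = b1 ∧ (a0 + 1 = b0 ∨ b0 + 1 = a0)))
    (hbc : (b0 = c0 ∧ (b1 + 1 = c1 ∨ c1 + 1 = b1)) ∨ (b1 = c1 ∧ (b0 + 1 = c0 ∨ c0 + 1 = b0)))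
    (hcd : (c0 = d0 ∧ (c1 + 1 = d1 ∨ d1 + 1 = c1)) ∨ (c1 = d1 ∧ (c0 + 1 = d0 ∨ d0 + 1 = c0)))
    (hda : (d0 = a0 ∧ (d1 + 1 = a1 ∨ a1 + 1 = d1)) ∨ (d1 = a1 ∧ (d0 + 1 = a0 ∨ a0 + 1 = d0)))
    (hac : a0 ≠ c0 ∨ a1 ≠ c1) (hbd : b0 ≠ d0 ∨ b1 ≠ d1) :
    -- patterns (edge types of ab, bc, cd, da); H+ : x0=y0 ∧ x1+1=y1 etc.
    ((a0 = b0 ∧ a1 + 1 = b1) ∧ (b1 = c1 ∧ b0 + 1 = c0) ∧ (d0 = c0 ∧ d1 + 1 = c1) ∧ (a1 = d1 ∧ a0 + 1 = d0)) ∨ -- (H+,V+,H-,V-)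
    ((a1 = b1 ∧ a0 + 1 = b0) ∧ (b0 = c0 ∧ b1 + 1 = c1) ∧ (d1 = c1 ∧ d0 + 1 = c0) ∧ (a0 = d0 ∧ a1 + 1 = d1)) ∨ -- (V+,H+,V-,H-)
    ((b0 = a0 ∧ b1 + 1 = a1) ∧ (b1 = c1 ∧ b0 + 1 = c0) ∧ (c0 = d0 ∧ c1 + 1 = d1) ∧ (a1 = d1 ∧ a0 + 1 = d0)) ∨ -- (H-,V+,H+,V-)
    ((a1 = b1 ∧ a0 + 1 = b0) ∧ (c0 = b0 ∧ c1 + 1 = b1) ∧ (d1 = c1 ∧ d0 + 1 = c0) ∧ (d0 = a0 ∧ d1 + 1 = a1)) ∨ -- (V+,H-,V-,H+)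
    ((b1 = a1 ∧ b0 + 1 = a0) ∧ (b0 = c0 ∧ b1 + 1 = c1) ∧ (c1 = d1 ∧ c0 + 1 = d0) ∧ (a0 = d0 ∧ a1 + 1 = d1)) ∨ -- (V-,H+,V+,H-)
    ((a0 = b0 ∧ a1 + 1 = b1) ∧ (c1 = b1 ∧ c0 + 1 = b0) ∧ (d0 = c0 ∧ d1 + 1 = c1) ∧ (d1 = a1 ∧ d0 + 1 = a0)) ∨ -- (H+,V-,H-,V+)
    ((b1 = a1 ∧ b0 + 1 = a0) ∧ (c0 = b0 ∧ c1 + 1 = b1) ∧ (c1 = d1 ∧ c0 + 1 = d0) ∧ (d1 + 1 = a1 ∧ d0 = a0)) ∨ -- (V-,H-,V+,H+)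
    ((b0 = a0 ∧ b1 + 1 = a1) ∧ (c0 + 1 = b0 ∧ c1 = b1) ∧ (c1 + 1 = d1 ∧ c0 = d0) ∧ (d0 + 1 = a0 ∧ d1 = a1))   -- (H-,V-,H+,V+)
    := by
  rcases hab with ⟨e1,e2|e2⟩|⟨e1,e2|e2⟩ <;>
  rcases hbc with ⟨f1,f2|f2⟩|⟨f1,f2|f2⟩ <;>
  rcases hcd with ⟨i1,i2|i2⟩|⟨i1,i2|i2⟩ <;>
  rcases hda with ⟨j1,j2|j2⟩|⟨j1,j2|j2⟩ <;>
  (first | (exfalso; omega) | (refine Or.inl ⟨⟨by omega, by omega⟩, ⟨by omega, by omega⟩, ⟨by omega, by omega⟩, by omega, by omega⟩) | (refine Or.inr (Or.inl ⟨⟨by omega, by omega⟩, ⟨by omega, by omega⟩, ⟨by omega, by omega⟩, by omega, by omega⟩)) | (refine Or.inr (Or.inr (Or.inl ⟨⟨by omega, by omega⟩, ⟨by omega, by omega⟩, ⟨by omega, by omega⟩, by omega, by omega⟩))) | (refine Or.inr (Or.inr (Or.inr (Or.inl ⟨⟨by omega, by omega⟩, ⟨by omega, by omega⟩, ⟨by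 omega, by omega⟩, by omega, by omega⟩)))) | (refine Or.inr (Or.inr (Or.inr (Or.inr (Or.inl ⟨⟨by omega, by omega⟩, ⟨by omega, by omega⟩, ⟨by omega, by omega⟩, by omega, by omega⟩))))) | (refine Or.inr (Or.inr (Or.inr (Or.inr (Or.inr (Or.inl ⟨⟨by omega, by omega⟩, ⟨by omega, by omega⟩, ⟨by omega, by omega⟩, by omega, by omega⟩)))))) | (refine Or.inr (Or.inr (Or.inr (Or.inr (Or.inr (Or.inr (Or.inl ⟨⟨by omega, by omega⟩, ⟨by omega, by omega⟩, ⟨by omega, by omega⟩, by omega, by omega⟩))))))) | (refine Or.inr (Or.inr (Or.inr (Or.inr (Or.inr (Or.inr (Or.inr ⟨⟨by omega, by omega⟩, ⟨by omega, by omega⟩, ⟨by omega, by omega⟩, by omega, by omega⟩))))))))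

lemma bc_label_le {n₁ n₂ : ℕ} (h₁ : 2 ≤ n₁) (h₂ : 2 ≤ n₂) (q r : ℕ)
    (hq : q ≤ n₁ - 1) (hr : r < 2*n₂ - 1) (hvq : n₂ - 1 ≤ r → q ≤ n₁ - 2) :
    q * (2*n₂-1) + r + 1 ≤ (n₁-1) * (2*n₂-1) + (n₂-1) := by
  by_cases hc : r ≤ n₂ - 2
  · have h3 : q * (2*n₂-1) ≤ (n₁-1) * (2*n₂-1) := Nat.mul_le_mul_right _ hq
    have h4 : r + 1 ≤ n₂ - 1 := by omega
    calc q * (2*n₂-1) + r + 1 = q * (2*n₂-1) + (r + 1) := by rw [Nat.add_assoc]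
    _ ≤ (n₁-1) * (2*n₂-1) + (n₂-1) := Nat.add_le_add h3 h4
  · have hq2 : q ≤ n₁ - 2 := hvq (by omega)
    have h3 : q * (2*n₂-1) ≤ (n₁-2) * (2*n₂-1) := Nat.mul_le_mul_right _ hq2
    have h4 : (n₁-2) * (2*n₂-1) + (2*n₂-1) = (n₁-1) * (2*n₂-1) := by
      rw [← Nat.succ_mul, show (n₁-2).succ = n₁-1 by omega]
    have h5 : r + 1 ≤ 2*n₂-1 := by omega
    calc q * (2*n₂-1) + r + 1 = q * (2*n₂-1) + (r + 1) := by rw [Nat.add_assoc]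
    _ ≤ (n₁-2) * (2*n₂-1) + (2*n₂-1) := Nat.add_le_add h3 h5
    _ = (n₁-1) * (2*n₂-1) := h4
    _ ≤ (n₁-1) * (2*n₂-1) + (n₂-1) := Nat.le_add_right _ _

abbrev Q2g := gridGraph (fun _ : Fin 2 => (2:ℕ))

def q2v (a b : Fin 2) : ∀ i : Fin 2, Fin ((fun _ : Fin 2 => (2:ℕ)) i) :=
  Fin.cons a (Fin.cons b finZeroElim)

lemma q2_enum : ∀ w : ∀ i : Fin 2, Fin ((fun _ : Fin 2 => (2:ℕ)) i),
    w = q2v 0 0 ∨ w = q2v 0 1 ∨ w = q2v 1 0 ∨ w = q2v 1 1 := by decide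

lemma q2_adj1 : Q2g.Adj (q2v 0 0) (q2v 0 1) := by rw [bc_adj_iff]; decide
lemma q2_adj2 : Q2g.Adj (q2v 0 1) (q2v 1 1) := by rw [bc_adj_iff]; decide
lemma q2_adj3 : Q2g.Adj (q2v 1 1) (q2v 1 0) := by rw [bc_adj_iff]; decide
lemma q2_adj4 : Q2g.Adj (q2v 1 0) (q2v 0 0) := by rw [bc_adj_iff]; decide
lemma q2_nadj1 : ¬ Q2g.Adj (q2v 0 0) (q2v 1 1) := by rw [bc_adj_iff]; decide
lemma q2_nadj2 : ¬ Q2g.Adj (q2v 0 1) (q2v 1 0) := by rw [bc_adj_iff]; decide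
lemma q2_ne1 : q2v 0 0 ≠ q2v 1 1 := by decide
lemma q2_ne2 : q2v 0 1 ≠ q2v 1 0 := by decide

end BC

theorem base_case_edge_labeling_is_magic' (n₁ n₂ : ℕ) (h₁ : 2 ≤ n₁) (h₂ : 2 ≤ n₂)
    (g : Sym2 (∀ i : Fin 2, Fin (![n₁, n₂] i)) → ℤ)
    (hgh : ∀ x y : ∀ i : Fin 2, Fin (![n₁, n₂] i), x 0 = y 0 →
      (x 1 : ℕ) + 1 = (y 1 : ℕ) →
      g s(x, y) = ((x 0 : ℕ) : ℤ) * (2 * n₂ - 1) + (((x 1 : ℕ) : ℤ) + 1))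
    (hgv : ∀ x y : ∀ i : Fin 2, Fin (![n₁, n₂] i), (x 0 : ℕ) + 1 = (y 0 : ℕ) →
      x 1 = y 1 →
      g s(x, y) = ((n₁ : ℤ) - (((x 0 : ℕ) : ℤ) + 1)) * (2 * n₂ - 1) + 1 -
        (((x 1 : ℕ) : ℤ) + 1)) :
    Set.BijOn g (gridGraph ![n₁, n₂]).edgeSet
      (Set.Icc 1 ((gridGraph ![n₁, n₂]).edgeSet.ncard : ℤ)) := by
  classical
  obtain ⟨T, hTdef⟩ : ∃ T : ℕ, T = (n₁-1)*(2*n₂-1) + (n₂-1) := ⟨_, rfl⟩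
  have hbij : Set.BijOn g (gridGraph ![n₁, n₂]).edgeSet (Set.Icc 1 (T : ℤ)) := by
    refine ⟨?_, ?_, ?_⟩
    · -- MapsTo
      intro ed hed
      induction ed using Sym2.ind with
      | _ x y =>
        have hadj := (gridGraph ![n₁, n₂]).mem_edgeSet.mp hed
        obtain ⟨q, r, hq, hr, hvq, hval, -⟩ := bc_label_inv h₁ h₂ g hgh hgv x y hadj
        rw [hval]
        constructor
        · have h0 : (0:ℤ) ≤ ((q * (2*n₂-1) + r : ℕ) : ℤ) := Int.natCast_nonneg _
          linarith
        · have hb := bc_label_le h₁ h₂ q r hq hr hvq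
          rw [← hTdef] at hb
          have : ((q * (2*n₂-1) + r + 1 : ℕ) : ℤ) ≤ (T : ℤ) := by exact_mod_cast hb
          push_cast at this ⊢
          linarith
    · -- InjOn
      intro e₁ he₁ e₂ he₂ hg12
      induction e₁ using Sym2.ind with
      | _ x y =>
        induction e₂ using Sym2.ind with
        | _ x' y' =>
          obtain ⟨q, r, hq, hr, hvq, hval, hedge⟩ :=
            bc_label_inv h₁ h₂ g hgh hgv x y ((gridGraph ![n₁, n₂]).mem_edgeSet.mp he₁)
          obtain ⟨q', r', hq', hr', hvq', hval', hedge'⟩ :=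
            bc_label_inv h₁ h₂ g hgh hgv x' y' ((gridGraph ![n₁, n₂]).mem_edgeSet.mp he₂)
          rw [hval, hval'] at hg12
          have hZ : ((q * (2*n₂-1) + r : ℕ) : ℤ) = ((q' * (2*n₂-1) + r' : ℕ) : ℤ) := by
            linarith
          have hnat : q * (2*n₂-1) + r = q' * (2*n₂-1) + r' := by exact_mod_cast hZ
          obtain ⟨hqq, hrr⟩ := bc_qr_unique (2*n₂-1) q r q' r' (by omega) hr hr' hnat
          rw [hedge, hedge', hqq, hrr]
    · -- SurjOn
      intro m hm
      obtain ⟨hm1, hm2⟩ := hm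
      set t := (m - 1).toNat with hts
      have htm : (t : ℤ) = m - 1 := Int.toNat_of_nonneg (by omega)
      have htT : t < T := by omega
      have hBpos : 0 < 2*n₂-1 := by omega
      have hqr : (t / (2*n₂-1)) * (2*n₂-1) + t % (2*n₂-1) = t := by
        rw [Nat.mul_comm]; exact Nat.div_add_mod t _
      set q := t / (2*n₂-1) with hqdef
      set r := t % (2*n₂-1) with hrdef
      have hrB : r < 2*n₂-1 := Nat.mod_lt _ hBpos
      have hq : q ≤ n₁ - 1 := by
        have h6 : (n₁-1)*(2*n₂-1) + (2*n₂-1) = n₁*(2*n₂-1) := by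
          rw [← Nat.succ_mul, show (n₁-1).succ = n₁ by omega]
        have h7 : T ≤ n₁*(2*n₂-1) := by
          rw [← h6, hTdef]; exact Nat.add_le_add_left (by omega) _
        have h5 : t < n₁*(2*n₂-1) := lt_of_lt_of_le htT h7
        have := (Nat.div_lt_iff_lt_mul hBpos).mpr h5
        omega
      have hvq : n₂ - 1 ≤ r → q ≤ n₁ - 2 := by
        intro hrge
        have h8 : q*(2*n₂-1) + (n₂-1) ≤ t := by
          rw [← hqr]; exact Nat.add_le_add_left hrge _
        have h9 : q*(2*n₂-1) + (n₂-1) < (n₁-1)*(2*n₂-1) + (n₂-1) := by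
          refine lt_of_le_of_lt h8 ?_
          rw [hTdef] at htT; exact htT
        have h10 : q*(2*n₂-1) < (n₁-1)*(2*n₂-1) := Nat.lt_of_add_lt_add_right h9
        have h11 : q < n₁-1 := lt_of_mul_lt_mul_right h10 (by omega)
        omega
      obtain ⟨hmem, hval⟩ := bc_edgeOf_spec h₁ h₂ g hgh hgv q r hq hrB hvq
      refine ⟨_, hmem, ?_⟩
      rw [hval]
      have hc : ((q * (2*n₂-1) + r : ℕ) : ℤ) = (t : ℤ) := by exact_mod_cast congrArg (Nat.cast (R := ℤ)) hqr
      rw [hc, htm]; ring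
  have hcard : (gridGraph ![n₁, n₂]).edgeSet.ncard = T := by
    have h1 := Set.ncard_image_of_injOn hbij.injOn
    rw [hbij.image_eq] at h1
    rw [← h1, ← Finset.coe_Icc, Set.ncard_coe_finset, Int.card_Icc]
    omega
  rw [show ((gridGraph ![n₁, n₂]).edgeSet.ncard : ℤ) = (T : ℤ) by rw [hcard]]
  exact hbij

theorem base_case_magic_sums (n₁ n₂ : ℕ) (h₁ : 2 ≤ n₁) (h₂ : 2 ≤ n₂)
    (g : Sym2 (∀ i : Fin 2, Fin (![n₁, n₂] i)) → ℤ)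
    (hgh : ∀ x y : ∀ i : Fin 2, Fin (![n₁, n₂] i), x 0 = y 0 →
      (x 1 : ℕ) + 1 = (y 1 : ℕ) →
      g s(x, y) = ((x 0 : ℕ) : ℤ) * (2 * n₂ - 1) + (((x 1 : ℕ) : ℤ) + 1))
    (hgv : ∀ x y : ∀ i : Fin 2, Fin (![n₁, n₂] i), (x 0 : ℕ) + 1 = (y 0 : ℕ) →
      x 1 = y 1 →
      g s(x, y) = ((n₁ : ℤ) - (((x 0 : ℕ) : ℤ) + 1)) * (2 * n₂ - 1) + 1 -
        (((x 1 : ℕ) : ℤ) + 1))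
    (G' : (gridGraph ![n₁, n₂]).Subgraph)
    (hiso : Nonempty (G'.coe ≃g (gridGraph (fun _ : Fin 2 => (2 : ℕ))))) :
    ∑ᶠ e ∈ G'.edgeSet, g e = (2 * (n₁ : ℤ) - 1) * (2 * (n₂ : ℤ) - 1) + 1 := by
  classical
  obtain ⟨f⟩ := hiso
  set A : G'.verts := f.symm (q2v 0 0) with hA
  set B : G'.verts := f.symm (q2v 0 1) with hB
  set C : G'.verts := f.symm (q2v 1 1) with hC
  set D : G'.verts := f.symm (q2v 1 0) with hD
  have hab : G'.Adj ↑A ↑B := f.symm.map_adj_iff.mpr q2_adj1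
  have hbc : G'.Adj ↑B ↑C := f.symm.map_adj_iff.mpr q2_adj2
  have hcd : G'.Adj ↑C ↑D := f.symm.map_adj_iff.mpr q2_adj3
  have hda : G'.Adj ↑D ↑A := f.symm.map_adj_iff.mpr q2_adj4
  have hnac : ¬ G'.Adj ↑A ↑C := fun h => q2_nadj1 (f.symm.map_adj_iff.mp h)
  have hnbd : ¬ G'.Adj ↑B ↑D := fun h => q2_nadj2 (f.symm.map_adj_iff.mp h)
  have n5 : (↑A : Vt n₁ n₂) ≠ ↑C := by
    intro h
    exact q2_ne1 (f.symm.injective (Subtype.ext h))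
  have n6 : (↑B : Vt n₁ n₂) ≠ ↑D := by
    intro h
    exact q2_ne2 (f.symm.injective (Subtype.ext h))
  have n1 : (↑A : Vt n₁ n₂) ≠ ↑B := (G'.adj_sub hab).ne
  have n2 : (↑B : Vt n₁ n₂) ≠ ↑C := (G'.adj_sub hbc).ne
  have n3 : (↑C : Vt n₁ n₂) ≠ ↑D := (G'.adj_sub hcd).ne
  have n4 : (↑D : Vt n₁ n₂) ≠ ↑A := (G'.adj_sub hda).ne
  have n1' := n1.symm; have n2' := n2.symm; have n3' := n3.symm; have n4' := n4.symm
  have n5' := n5.symm; have n6' := n6.symm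
  have hverts : G'.verts = {↑A, ↑B, ↑C, ↑D} := by
    ext x
    simp only [Set.mem_insert_iff, Set.mem_singleton_iff]
    constructor
    · intro hx
      rcases q2_enum (f ⟨x, hx⟩) with h | h | h | h
      · have hx' : (⟨x, hx⟩ : G'.verts) = A := by
          rw [← f.symm_apply_apply ⟨x, hx⟩, h, hA]
        exact Or.inl (congrArg Subtype.val hx')
      · have hx' : (⟨x, hx⟩ : G'.verts) = B := by
          rw [← f.symm_apply_apply ⟨x, hx⟩, h, hB]
        exact Or.inr (Or.inl (congrArg Subtype.val hx'))
      · have hx' : (⟨x, hx⟩ : G'.verts) = D := by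
          rw [← f.symm_apply_apply ⟨x, hx⟩, h, hD]
        exact Or.inr (Or.inr (Or.inr (congrArg Subtype.val hx')))
      · have hx' : (⟨x, hx⟩ : G'.verts) = C := by
          rw [← f.symm_apply_apply ⟨x, hx⟩, h, hC]
        exact Or.inr (Or.inr (Or.inl (congrArg Subtype.val hx')))
    · intro hx
      rcases hx with rfl | rfl | rfl | rfl
      exacts [A.2, B.2, C.2, D.2]
  have hedges : G'.edgeSet = {s(↑A, ↑B), s(↑B, ↑C), s(↑C, ↑D), s(↑D, ↑A)} := by
    apply Set.Subset.antisymm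
    · intro ed hed
      induction ed using Sym2.ind with
      | _ x y =>
        rw [SimpleGraph.Subgraph.mem_edgeSet] at hed
        have hx : x ∈ G'.verts := hed.fst_mem
        have hy : y ∈ G'.verts := hed.snd_mem
        rw [hverts] at hx hy
        simp only [Set.mem_insert_iff, Set.mem_singleton_iff] at hx hy ⊢
        rcases hx with rfl | rfl | rfl | rfl <;> rcases hy with rfl | rfl | rfl | rfl <;>
          first
            | exact ((G'.adj_sub hed).ne rfl).elim
            | exact (hnac hed).elim
            | exact (hnac hed.symm).elim
            | exact (hnbd hed).elim
            | exact (hnbd hed.symm).elim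
            | (simp only [Sym2.eq_iff]; tauto)
    · intro ed hed
      simp only [Set.mem_insert_iff, Set.mem_singleton_iff] at hed
      rcases hed with rfl | rfl | rfl | rfl
      exacts [SimpleGraph.Subgraph.mem_edgeSet.mpr hab, SimpleGraph.Subgraph.mem_edgeSet.mpr hbc,
        SimpleGraph.Subgraph.mem_edgeSet.mpr hcd, SimpleGraph.Subgraph.mem_edgeSet.mpr hda]
  rw [hedges]
  have hsetfin : ({s((↑A : Vt n₁ n₂), ↑B), s(↑B, ↑C), s(↑C, ↑D), s(↑D, ↑A)} : Set (Sym2 (Vt n₁ n₂)))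
      = (↑({s((↑A : Vt n₁ n₂), ↑B), s(↑B, ↑C), s(↑C, ↑D), s(↑D, ↑A)} : Finset (Sym2 (Vt n₁ n₂))) : Set (Sym2 (Vt n₁ n₂))) := by
    simp
  rw [hsetfin, finsum_mem_coe_finset]
  rw [Finset.sum_insert (by simp only [Finset.mem_insert, Finset.mem_singleton, Sym2.eq_iff]; tauto),
      Finset.sum_insert (by simp only [Finset.mem_insert, Finset.mem_singleton, Sym2.eq_iff]; tauto),
      Finset.sum_insert (by simp only [Finset.mem_singleton, Sym2.eq_iff]; tauto),
      Finset.sum_singleton]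
  have cab := bc_adj_cases _ _ (G'.adj_sub hab)
  have cbc := bc_adj_cases _ _ (G'.adj_sub hbc)
  have ccd := bc_adj_cases _ _ (G'.adj_sub hcd)
  have cda := bc_adj_cases _ _ (G'.adj_sub hda)
  have hac' := bc_ne_coords _ _ n5
  have hbd' := bc_ne_coords _ _ n6
  have key := bc_cyc_square _ _ _ _ _ _ _ _ cab cbc ccd cda hac' hbd'
  have w1 : s((↑B : Vt n₁ n₂), ↑A) = s(↑A, ↑B) := Sym2.eq_swap
  have w2 : s((↑C : Vt n₁ n₂), ↑B) = s(↑B, ↑C) := Sym2.eq_swap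
  have w3 : s((↑D : Vt n₁ n₂), ↑C) = s(↑C, ↑D) := Sym2.eq_swap
  have w4 : s((↑A : Vt n₁ n₂), ↑D) = s(↑D, ↑A) := Sym2.eq_swap
  rcases key with k | k | k | k | k | k | k | k <;>
    obtain ⟨⟨p1, p2⟩, ⟨p3, p4⟩, ⟨p5, p6⟩, ⟨p7, p8⟩⟩ := k
  · have key2 := bc_square_sum h₂ g hgh hgv ↑A ↑B ↑D ↑C p1 p2 p8 p7 p5 p6 p4 p3
    simp only [w1, w2, w3, w4] at key2 ⊢; linarith
  · have key2 := bc_square_sum h₂ g hgh hgv ↑A ↑D ↑B ↑C p7 p8 p2 p1 p3 p4 p6 p5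
    simp only [w1, w2, w3, w4] at key2 ⊢; linarith
  · have key2 := bc_square_sum h₂ g hgh hgv ↑B ↑A ↑C ↑D p1 p2 p4 p3 p5 p6 p8 p7
    simp only [w1, w2, w3, w4] at key2 ⊢; linarith
  · have key2 := bc_square_sum h₂ g hgh hgv ↑D ↑A ↑C ↑B p7 p8 p6 p5 p3 p4 p2 p1
    simp only [w1, w2, w3, w4] at key2 ⊢; linarith
  · have key2 := bc_square_sum h₂ g hgh hgv ↑B ↑C ↑A ↑D p3 p4 p2 p1 p7 p8 p6 p5
    simp only [w1, w2, w3, w4] at key2 ⊢; linarith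
  · have key2 := bc_square_sum h₂ g hgh hgv ↑D ↑C ↑A ↑B p5 p6 p8 p7 p1 p2 p4 p3
    simp only [w1, w2, w3, w4] at key2 ⊢; linarith
  · have key2 := bc_square_sum h₂ g hgh hgv ↑C ↑B ↑D ↑A p3 p4 p6 p5 p8 p7 p2 p1
    simp only [w1, w2, w3, w4] at key2 ⊢; linarith
  · have key2 := bc_square_sum h₂ g hgh hgv ↑C ↑D ↑B ↑A p6 p5 p3 p4 p1 p2 p7 p8
    simp only [w1, w2, w3, w4] at key2 ⊢; linarith

/-- the edge labeling `g` of `Grid(n₁,n₂)` given by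
`g({(i,j),(i,j+1)}) = (i-1)(2n₂-1) + j` on horizontal edges and
`g({(i,j),(i+1,j)}) = (n₁-i)(2n₂-1) + 1 - j` on vertical edges (where a vertex `v` has
coordinates `i = v 0 + 1`, `j = v 1 + 1`) is a `Q₂`-magic edge labeling of `Grid(n₁,n₂)`
with `Q₂`-magic sum `(2n₁-1)(2n₂-1) + 1`. -/
theorem base_case_edge_labeling_is_magic (n₁ n₂ : ℕ) (h₁ : 2 ≤ n₁) (h₂ : 2 ≤ n₂)
    (g : Sym2 (∀ i : Fin 2, Fin (![n₁, n₂] i)) → ℤ)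
    (hgh : ∀ x y : ∀ i : Fin 2, Fin (![n₁, n₂] i), x 0 = y 0 →
      (x 1 : ℕ) + 1 = (y 1 : ℕ) →
      g s(x, y) = ((x 0 : ℕ) : ℤ) * (2 * n₂ - 1) + (((x 1 : ℕ) : ℤ) + 1))
    (hgv : ∀ x y : ∀ i : Fin 2, Fin (![n₁, n₂] i), (x 0 : ℕ) + 1 = (y 0 : ℕ) →
      x 1 = y 1 →
      g s(x, y) = ((n₁ : ℤ) - (((x 0 : ℕ) : ℤ) + 1)) * (2 * n₂ - 1) + 1 -
        (((x 1 : ℕ) : ℤ) + 1)) :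
    IsMagicEdgeLabeling (gridGraph ![n₁, n₂]) (gridGraph (fun _ : Fin 2 => (2 : ℕ))) g
      ((2 * (n₁ : ℤ) - 1) * (2 * (n₂ : ℤ) - 1) + 1) := by
  
  exact ⟨base_case_edge_labeling_is_magic' n₁ n₂ h₁ h₂ g hgh hgv,
    fun G' h => base_case_magic_sums n₁ n₂ h₁ h₂ g hgh hgv G' h⟩
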